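/- Let z be a T-periodic C² solution of z'' + c·z' + b·d·exp(2z) = a·c + b·f(t). Then for all t, z'(t) ≥ −a·c·T − b·‖f⁻‖₁, where ‖f⁻‖₁ = ∫₀ᵀ max(−f(s), 0) ds. -/

import Mathlib

theorem stmt9 (a b c d T : ℝ) (ha : 0 < a) (hb : 0 < b) (hc : 0 < c) (hd : 0 < d)
    (hT : 0 < T) (f : ℝ → ℝ) (hf : Continuous f) (hfper : Function.Periodic f T)
    (hfmean : ∫ t in (0 : ℝ)..T, f t = 0)
    (z z' z'' : ℝ → ℝ)
    (hz1 : ∀ t, HasDerivAt z (z' t) t)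
    (hz2 : ∀ t, HasDerivAt z' (z'' t) t)
    (hz''cont : Continuous z'')
    (hzper : Function.Periodic z T)
    (heq : ∀ t, z'' t + c * z' t + b * d * Real.exp (2 * z t) = a * c + b * f t) :
    ∀ t, z' t ≥ -(a * c * T) - b * ∫ s in (0 : ℝ)..T, max (-f s) 0 := by
  have hzc : Continuous z := by
    have : Differentiable ℝ z := fun s => (hz1 s).differentiableAt
    exact this.continuous
  have hz'c : Continuous z' := by
    have : Differentiable ℝ z' := fun s => (hz2 s).differentiableAt
    exact this.continuous
  set e : ℝ → ℝ := fun s => Real.exp (2 * z s) with he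
  have hec : Continuous e := Real.continuous_exp.comp (continuous_const.mul hzc)
  set g : ℝ → ℝ := fun s => max (-f s) 0 with hg
  have hgc : Continuous g := (hf.neg).max continuous_const
  have hgper : Function.Periodic g T := by intro s; simp [hg, hfper s]
  -- z' is T-periodic
  have hz'per : Function.Periodic z' T := by
    intro s
    have h1 : HasDerivAt (fun x => z (x + T)) (z' (s + T)) s := by
      simpa [Function.comp_def] using (hz1 (s + T)).comp s ((hasDerivAt_id s).add_const T)
    have h2 : (fun x => z (x + T)) = z := funext fun x => hzper x
    rw [h2] at h1
    exact h1.unique (hz1 s)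
  -- integrating the equation over any interval
  have key : ∀ u v : ℝ,
      (z' v - z' u) + c * (z v - z u) + b * d * ∫ s in u..v, e s
        = a * c * (v - u) + b * ∫ s in u..v, f s := by
    intro u v
    have hft1 : ∫ s in u..v, z'' s = z' v - z' u :=
      intervalIntegral.integral_eq_sub_of_hasDerivAt (fun x _ => hz2 x)
        (hz''cont.intervalIntegrable _ _)
    have hft2 : ∫ s in u..v, z' s = z v - z u :=
      intervalIntegral.integral_eq_sub_of_hasDerivAt (fun x _ => hz1 x)
        (hz'c.intervalIntegrable _ _)
    have hsum : ∫ s in u..v, (z'' s + c * z' s + b * d * e s)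
        = (∫ s in u..v, z'' s) + c * (∫ s in u..v, z' s) + b * d * ∫ s in u..v, e s := by
      rw [intervalIntegral.integral_add (f := fun s => z'' s + c * z' s) (g := fun s => b * d * e s)
          ((hz''cont.add (continuous_const.mul hz'c)).intervalIntegrable _ _)
          ((continuous_const.mul hec).intervalIntegrable _ _),
        intervalIntegral.integral_add (g := fun s => c * z' s) (hz''cont.intervalIntegrable _ _)
          ((continuous_const.mul hz'c).intervalIntegrable _ _),
        intervalIntegral.integral_const_mul, intervalIntegral.integral_const_mul]
    have hrhs : ∫ s in u..v, (a * c + b * f s)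
        = a * c * (v - u) + b * ∫ s in u..v, f s := by
      rw [intervalIntegral.integral_add (f := fun _ => a * c) (g := fun s => b * f s) (intervalIntegrable_const)
          ((continuous_const.mul hf).intervalIntegrable _ _),
        intervalIntegral.integral_const, intervalIntegral.integral_const_mul,
        smul_eq_mul]
      ring
    have hcongr : ∫ s in u..v, (z'' s + c * z' s + b * d * e s)
        = ∫ s in u..v, (a * c + b * f s) :=
      intervalIntegral.integral_congr (fun s _ => heq s)
    rw [hsum, hrhs, hft1, hft2] at hcongr
    exact hcongr
  intro t
  -- maximum of z on [t - T, t]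
  have hsub : t - T ≤ t := by linarith
  obtain ⟨t₀, ht₀, hmax⟩ := isCompact_Icc.exists_isMaxOn (Set.nonempty_Icc.2 hsub)
    hzc.continuousOn
  have hglob : ∀ s, z s ≤ z t₀ := by
    intro s
    obtain ⟨y, hy, hyz⟩ := hzper.exists_mem_Ico hT s (t - T)
    have : y ∈ Set.Icc (t - T) t := by
      constructor
      · exact hy.1
      · have := hy.2; linarith
    rw [hyz]
    exact hmax this
  have hz't₀ : z' t₀ = 0 := by
    have hl : IsLocalMax z t₀ := Filter.Eventually.of_forall hglob
    exact hl.hasDerivAt_eq_zero (hz1 t₀)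
  have ht₀1 : t - T ≤ t₀ := ht₀.1
  have ht₀2 : t₀ ≤ t := ht₀.2
  -- mean identity: b*d * ∫ over a period of e = a*c*T
  have hmean : b * d * ∫ s in t₀..(t₀ + T), e s = a * c * T := by
    have := key t₀ (t₀ + T)
    rw [hz'per t₀, hzper t₀] at this
    have hfint : (∫ s in t₀..(t₀ + T), f s) = 0 := by
      rw [hfper.intervalIntegral_add_eq t₀ 0, zero_add]; exact hfmean
    rw [hfint] at this
    simp only [sub_self, zero_add, mul_zero, add_zero] at this
    linarith [this]
  -- ∫ e over [t₀, t] ≤ ∫ e over period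
  have hesplit : (∫ s in t₀..t, e s) + (∫ s in t..(t₀ + T), e s)
      = ∫ s in t₀..(t₀ + T), e s :=
    intervalIntegral.integral_add_adjacent_intervals (hec.intervalIntegrable _ _)
      (hec.intervalIntegrable _ _)
  have hepos : 0 ≤ ∫ s in t..(t₀ + T), e s :=
    intervalIntegral.integral_nonneg (by linarith) (fun s _ => (Real.exp_pos _).le)
  have he1 : ∫ s in t₀..t, e s ≤ ∫ s in t₀..(t₀ + T), e s := by linarith
  -- ∫ f ≥ -∫ g on [t₀, t]
  have hfg : -(∫ s in t₀..t, g s) ≤ ∫ s in t₀..t, f s := by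
    rw [← intervalIntegral.integral_neg]
    apply intervalIntegral.integral_mono_on ht₀2
      ((hgc.neg).intervalIntegrable _ _) (hf.intervalIntegrable _ _)
    intro s _
    have h : -f s ≤ max (-f s) 0 := le_max_left _ _
    simp only [hg, Pi.neg_apply]
    linarith
  -- ∫ g on [t₀, t] ≤ ∫ g over period = ∫₀ᵀ g
  have hgsplit : (∫ s in t₀..t, g s) + (∫ s in t..(t₀ + T), g s)
      = ∫ s in t₀..(t₀ + T), g s :=
    intervalIntegral.integral_add_adjacent_intervals (hgc.intervalIntegrable _ _)
      (hgc.intervalIntegrable _ _)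
  have hgpos : 0 ≤ ∫ s in t..(t₀ + T), g s :=
    intervalIntegral.integral_nonneg (by linarith) (fun s _ => le_max_right _ _)
  have hgper' : (∫ s in t₀..(t₀ + T), g s) = ∫ s in (0:ℝ)..T, g s := by
    rw [hgper.intervalIntegral_add_eq t₀ 0, zero_add]
  have hg1 : ∫ s in t₀..t, g s ≤ ∫ s in (0:ℝ)..T, g s := by
    rw [← hgper']; linarith
  -- assemble
  have hk := key t₀ t
  rw [hz't₀] at hk
  have hzz : z t - z t₀ ≤ 0 := by
    have := hglob t
    linarith
  have h1 : b * d * ∫ s in t₀..t, e s ≤ a * c * T := by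
    rw [← hmean]
    have hbd : 0 ≤ b * d := by positivity
    exact mul_le_mul_of_nonneg_left he1 hbd
  have h2 : -(b * ∫ s in (0:ℝ)..T, g s) ≤ b * ∫ s in t₀..t, f s := by
    have h3 : -(∫ s in (0:ℝ)..T, g s) ≤ ∫ s in t₀..t, f s := by linarith
    nlinarith [hb.le]
  have h4 : 0 ≤ a * c * (t - t₀) := by
    have : 0 ≤ t - t₀ := by linarith
    positivity
  have h5 : c * (z t - z t₀) ≤ 0 := mul_nonpos_of_nonneg_of_nonpos hc.le hzz
  simp only [hg] at h2
  linarith
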